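/- Let D be a reversible Hadamard difference set with parameters (4n², 2n² - n, n² - n) in a finite group G, and suppose there exists a subgroup H ≤ G of order 2n with D ∩ H = ∅. Then the vertex set of the Cayley graph Cay(G, D) can be partitioned into 2n disjoint cocliques, each of size 2n; consequently there exists a symmetric Bush-type Hadamard matrix of order 4n². -/

import Mathlib

/-- `H` is a symmetric Bush-type Hadamard matrix of order `4n²`, with rows and
columns indexed by pairs (block index, position within block). -/
def IsSymmetricBushType (n : ℕ)
    (H : Matrix (Fin (2 * n) × Fin (2 * n)) (Fin (2 * n) × Fin (2 * n)) ℤ) : Prop :=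
  (∀ x y, H x y = 1 ∨ H x y = -1) ∧
  H.transpose = H ∧
  H * H.transpose = ((4 * n ^ 2 : ℕ) : ℤ) •
    (1 : Matrix (Fin (2 * n) × Fin (2 * n)) (Fin (2 * n) × Fin (2 * n)) ℤ) ∧
  (∀ i a b, H (i, a) (i, b) = 1) ∧
  (∀ i j, i ≠ j → ∀ a, ∑ b, H (i, a) (j, b) = 0) ∧
  (∀ i j, i ≠ j → ∀ b, ∑ a, H (i, a) (j, b) = 0)

set_option maxHeartbeats 2000000 in
theorem reversible_hds_with_disjoint_subgroup {G : Type*} [Group G] [Fintype G]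
    [DecidableEq G] (n : ℕ) (D : Finset G)
    (hv : Fintype.card G = 4 * n ^ 2) (hk : D.card = 2 * n ^ 2 - n)
    (hdiff : ∀ g : G, g ≠ 1 →
      ((D ×ˢ D).filter fun p => p.1 ≠ p.2 ∧ p.1 * p.2⁻¹ = g).card = n ^ 2 - n)
    (hrev : ∀ d : G, d ∈ D → d⁻¹ ∈ D)
    (H : Subgroup G) (hH : Nat.card H = 2 * n) (hdisj : ∀ h ∈ H, h ∉ D) :
    (∃ C : Fin (2 * n) → Finset G,
      (∀ x : G, ∃! i, x ∈ C i) ∧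
      (∀ i, (C i).card = 2 * n) ∧
      (∀ i, ∀ x ∈ C i, ∀ y ∈ C i, x * y⁻¹ ∉ D)) ∧
    ∃ M : Matrix (Fin (2 * n) × Fin (2 * n)) (Fin (2 * n) × Fin (2 * n)) ℤ,
      IsSymmetricBushType n M := by
  classical
  have hn : 0 < n := by
    rcases Nat.eq_zero_or_pos n with h0 | h
    · have := Fintype.card_pos (α := G)
      rw [hv, h0] at this; simp at this
    · exact h
  have hrev' : ∀ x y : G, x * y⁻¹ ∈ D ↔ y * x⁻¹ ∈ D := by
    intro x y
    constructor
    · intro h; have := hrev _ h; simpa using this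
    · intro h; have := hrev _ h; simpa using this
  set Q := Quotient (QuotientGroup.rightRel H) with hQdef
  let π : G → Q := fun x => Quotient.mk _ x
  have hπ : ∀ x y : G, π x = π y ↔ x * y⁻¹ ∈ H := by
    intro x y
    rw [show (π x = π y) ↔ _ from Quotient.eq, QuotientGroup.rightRel_apply]
    constructor
    · intro h; simpa using H.inv_mem h
    · intro h; simpa using H.inv_mem h
  have hπ1 : ∀ x : G, π x = π 1 ↔ x ∈ H := by
    intro x; rw [hπ]; simp
  have hHF : (Finset.univ.filter (· ∈ H)).card = 2 * n := by
    rw [← Fintype.card_subtype, ← Nat.card_eq_fintype_card]; exact hH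
  have hQ : Fintype.card Q = 2 * n := by
    have h1 : H.index * Nat.card H = Nat.card G := H.index_mul_card
    rw [hH, Nat.card_eq_fintype_card, hv] at h1
    have h2 : H.index = 2 * n := by
      have hpos : 0 < 2 * n := by omega
      have : H.index * (2 * n) = (2 * n) * (2 * n) := by rw [h1]; ring
      exact Nat.eq_of_mul_eq_mul_right hpos this
    rw [show Fintype.card Q = Fintype.card (G ⧸ H) from
      QuotientGroup.card_quotient_rightRel H, ← Nat.card_eq_fintype_card,
      ← Subgroup.index_eq_card, h2]
  -- size of each coset
  have hfiber : ∀ q : Q, (Finset.univ.filter fun z => π z = q).card = 2 * n := by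
    intro q
    rw [← hHF]
    apply Finset.card_bij (fun z _ => z * q.out⁻¹)
    · intro z hz
      simp only [Finset.mem_filter, Finset.mem_univ, true_and] at hz ⊢
      have h1 : π z = π q.out := by rw [hz]; exact (Quotient.out_eq q).symm
      exact (hπ _ _).1 h1
    · intro a _ b _ hab
      exact mul_right_cancel hab
    · intro h hh
      simp only [Finset.mem_filter, Finset.mem_univ, true_and] at hh
      refine ⟨h * q.out, ?_, by group⟩
      simp only [Finset.mem_filter, Finset.mem_univ, true_and]
      have h1 : π (h * q.out) = π q.out := by
        rw [hπ]; simpa using hh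
      rw [h1]; exact Quotient.out_eq q
  -- the intersection numbers
  set f : Q → ℕ := fun q => (D.filter fun x => π x = q).card with hfdef
  have P1 : ∑ q : Q, f q = D.card :=
    (Finset.card_eq_sum_card_fiberwise (fun x _ => Finset.mem_univ (π x))).symm
  have P3 : f (π 1) = 0 := by
    simp only [hfdef, Finset.card_eq_zero, Finset.filter_eq_empty_iff]
    intro x hx h1
    exact hdisj x ((hπ1 x).1 h1) hx
  -- counting pairs with difference in H, two ways
  have P2 : ∑ q : Q, f q * f q = (2 * n - 1) * (n ^ 2 - n) + D.card := by
    have hT : ((D ×ˢ D).filter fun p => p.1 * p.2⁻¹ ∈ H).card = ∑ q : Q, f q * f q := by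
      rw [Finset.card_eq_sum_card_fiberwise
        (f := fun p : G × G => π p.1) (t := Finset.univ) (fun x _ => Finset.mem_univ _)]
      refine Finset.sum_congr rfl fun q _ => ?_
      have he : (((D ×ˢ D).filter fun p => p.1 * p.2⁻¹ ∈ H).filter fun p => π p.1 = q)
          = (D.filter fun x => π x = q) ×ˢ (D.filter fun x => π x = q) := by
        ext p
        simp only [Finset.mem_filter, Finset.mem_product]
        constructor
        · rintro ⟨⟨⟨h1, h2⟩, h3⟩, h4⟩
          exact ⟨⟨h1, h4⟩, h2, by rw [← h4]; exact ((hπ _ _).2 h3).symm⟩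
        · rintro ⟨⟨h1, h4⟩, h2, h5⟩
          exact ⟨⟨⟨h1, h2⟩, (hπ _ _).1 (h4.trans h5.symm)⟩, h4⟩
      rw [he, Finset.card_product]
    have hsplit : ((D ×ˢ D).filter fun p => p.1 ≠ p.2 ∧ p.1 * p.2⁻¹ ∈ H).card
          + ((D ×ˢ D).filter fun p => p.1 = p.2).card
        = ((D ×ˢ D).filter fun p => p.1 * p.2⁻¹ ∈ H).card := by
      have e1 : ((D ×ˢ D).filter fun p => p.1 ≠ p.2 ∧ p.1 * p.2⁻¹ ∈ H)
          = ((D ×ˢ D).filter fun p => p.1 * p.2⁻¹ ∈ H).filter fun p => p.1 ≠ p.2 := by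
        rw [Finset.filter_filter]
        exact Finset.filter_congr fun p _ => by tauto
      have e2 : ((D ×ˢ D).filter fun p => p.1 = p.2)
          = ((D ×ˢ D).filter fun p => p.1 * p.2⁻¹ ∈ H).filter fun p => ¬ p.1 ≠ p.2 := by
        rw [Finset.filter_filter]
        refine Finset.filter_congr fun p _ => ?_
        simp only [ne_eq, not_not]
        constructor
        · intro h; exact ⟨by rw [h]; simpa using H.one_mem, h⟩
        · intro h; exact h.2
      rw [e1, e2]
      exact Finset.card_filter_add_card_filter_not _
    have hdiag : ((D ×ˢ D).filter fun p => p.1 = p.2).card = D.card := by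
      apply Finset.card_bij (fun p _ => p.1)
      · intro p hp
        simp only [Finset.mem_filter, Finset.mem_product] at hp
        exact hp.1.1
      · intro p hp p' hp' hpp
        simp only [Finset.mem_filter, Finset.mem_product] at hp hp'
        exact Prod.ext hpp (by rw [← hp.2, ← hp'.2, hpp])
      · intro d hd
        exact ⟨(d, d), by simp [hd], rfl⟩
    have hS : ((D ×ˢ D).filter fun p => p.1 ≠ p.2 ∧ p.1 * p.2⁻¹ ∈ H).card
        = (2 * n - 1) * (n ^ 2 - n) := by
      rw [Finset.card_eq_sum_card_fiberwise
        (f := fun p : G × G => p.1 * p.2⁻¹) (t := (Finset.univ.filter (· ∈ H)).erase 1) ?_]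
      · rw [Finset.sum_congr rfl (g := fun _ => n ^ 2 - n) ?_, Finset.sum_const,
          Finset.card_erase_of_mem, hHF, smul_eq_mul]
        · simp [H.one_mem]
        · intro g hg
          simp only [Finset.mem_erase, Finset.mem_filter, Finset.mem_univ, true_and] at hg
          rw [← hdiff g hg.1]
          congr 1
          ext p
          simp only [Finset.mem_filter, Finset.mem_product]
          constructor
          · rintro ⟨⟨hp, hne, _⟩, he⟩
            exact ⟨hp, hne, he⟩
          · rintro ⟨hp, hne, he⟩
            exact ⟨⟨hp, hne, he ▸ hg.2⟩, he⟩
      · intro p hp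
        simp only [Finset.mem_coe, Finset.mem_filter, Finset.mem_product] at hp
        simp only [Finset.mem_coe, Finset.mem_erase, Finset.mem_filter, Finset.mem_univ, true_and]
        refine ⟨?_, hp.2.2⟩
        intro h1
        exact hp.2.1 (by rwa [mul_inv_eq_one] at h1)
    omega
  -- every nontrivial coset meets D in exactly n points
  have key : ∀ q : Q, q ≠ π 1 → f q = n := by
    have hsum : ∑ q : Q, (f q : ℤ) = 2 * (n : ℤ) ^ 2 - n := by
      have h1 : ((∑ q : Q, f q : ℕ) : ℤ) = ((2 * n ^ 2 - n : ℕ) : ℤ) := by rw [P1, hk]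
      rw [Nat.cast_sub (by nlinarith : n ≤ 2 * n ^ 2)] at h1
      push_cast at h1 ⊢
      linarith [h1]
    have hsq : ∑ q : Q, (f q : ℤ) * (f q : ℤ)
        = (2 * (n : ℤ) - 1) * ((n : ℤ) ^ 2 - n) + (2 * (n : ℤ) ^ 2 - n) := by
      have h1 : ((∑ q : Q, f q * f q : ℕ) : ℤ)
          = (((2 * n - 1) * (n ^ 2 - n) + D.card : ℕ) : ℤ) := by rw [P2]
      rw [hk, Nat.cast_add, Nat.cast_mul, Nat.cast_sub (by omega : 1 ≤ 2 * n),
        Nat.cast_sub (by nlinarith : n ≤ n ^ 2),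
        Nat.cast_sub (by nlinarith : n ≤ 2 * n ^ 2)] at h1
      push_cast at h1 ⊢
      linarith [h1]
    have htotal : ∑ q : Q, ((f q : ℤ) - n) ^ 2 = (n : ℤ) ^ 2 := by
      have expand : ∀ q : Q, ((f q : ℤ) - n) ^ 2
          = (f q : ℤ) * (f q : ℤ) - 2 * n * (f q : ℤ) + n ^ 2 := fun q => by ring
      rw [Finset.sum_congr rfl fun q _ => expand q, Finset.sum_add_distrib,
        Finset.sum_sub_distrib, ← Finset.mul_sum, hsq, hsum, Finset.sum_const,
        Finset.card_univ, hQ, nsmul_eq_mul]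
      push_cast; ring
    have herase : ∑ q ∈ Finset.univ.erase (π 1), ((f q : ℤ) - n) ^ 2 = 0 := by
      have h1 := Finset.add_sum_erase Finset.univ (fun q : Q => ((f q : ℤ) - n) ^ 2)
        (Finset.mem_univ (π 1))
      rw [htotal] at h1
      simp only [P3, Nat.cast_zero, zero_sub, neg_sq] at h1
      linarith [h1]
    intro q hq
    have h2 := (Finset.sum_eq_zero_iff_of_nonneg
      (fun q _ => sq_nonneg ((f q : ℤ) - n))).1 herase q
      (Finset.mem_erase.2 ⟨hq, Finset.mem_univ q⟩)
    have h3 : (f q : ℤ) = n := by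
      have h4 := sq_eq_zero_iff.mp h2
      linarith [sub_eq_zero.1 h4]
    exact_mod_cast h3
  -- block count: in any other coset, every vertex has exactly n neighbours
  have hblock : ∀ x y : G, π x ≠ π y →
      (Finset.univ.filter fun z => π z = π y ∧ x * z⁻¹ ∈ D).card = n := by
    intro x y hxy
    have hne : π (y * x⁻¹) ≠ π 1 := by
      intro h
      have h2 : y * x⁻¹ ∈ H := (hπ1 _).1 h
      exact hxy ((hπ x y).2 (by simpa using H.inv_mem h2))
    have hb : (Finset.univ.filter fun z => π z = π y ∧ x * z⁻¹ ∈ D).card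
        = (D.filter fun w => π w = π (y * x⁻¹)).card := by
      apply Finset.card_bij (fun z _ => z * x⁻¹)
      · intro z hz
        simp only [Finset.mem_filter, Finset.mem_univ, true_and] at hz ⊢
        refine ⟨(hrev' x z).1 hz.2, ?_⟩
        rw [hπ]
        have := (hπ z y).1 hz.1
        convert this using 1
        group
      · intro a _ b _ hab
        exact mul_right_cancel hab
      · intro w hw
        simp only [Finset.mem_filter] at hw
        refine ⟨w * x, Finset.mem_filter.2 ⟨Finset.mem_univ _, ?_, ?_⟩, by group⟩
        · rw [hπ]
          have := (hπ w (y * x⁻¹)).1 hw.2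
          convert this using 1
          group
        · exact (hrev' _ _).2 (by simpa using hw.1)
    rw [hb]
    exact key _ hne
  -- the lambda count, in vertex form
  have hlam : ∀ x y : G, x ≠ y →
      (Finset.univ.filter fun z => x * z⁻¹ ∈ D ∧ y * z⁻¹ ∈ D).card = n ^ 2 - n := by
    intro x y hxy
    rw [← hdiff (x * y⁻¹) fun h => hxy (by rwa [mul_inv_eq_one] at h)]
    apply Finset.card_bij (fun z _ => (x * z⁻¹, y * z⁻¹))
    · intro z hz
      simp only [Finset.mem_filter, Finset.mem_univ, true_and] at hz
      simp only [Finset.mem_filter, Finset.mem_product]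
      refine ⟨⟨hz.1, hz.2⟩, ?_, by group⟩
      intro h
      exact hxy (mul_right_cancel h)
    · intro a _ b _ hab
      have h1 := congrArg Prod.fst hab
      simp only at h1
      have h2 : a⁻¹ = b⁻¹ := mul_left_cancel h1
      simpa using h2
    · intro p hp
      simp only [Finset.mem_filter, Finset.mem_product] at hp
      obtain ⟨⟨h1, h2⟩, hne, he⟩ := hp
      have hy : y * (p.1⁻¹ * x)⁻¹ = p.2 := by
        have hxy2 : y = p.2 * p.1⁻¹ * x := by
          rw [mul_inv_eq_iff_eq_mul] at he
          rw [he]; group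
        rw [hxy2]; group
      have hx1 : x * (p.1⁻¹ * x)⁻¹ = p.1 := by group
      refine ⟨p.1⁻¹ * x, Finset.mem_filter.2 ⟨Finset.mem_univ _, ?_, ?_⟩, ?_⟩
      · rw [hx1]; exact h1
      · rw [hy]; exact h2
      · rw [hx1, hy]
  -- the degree count
  have hdeg : ∀ x : G, (Finset.univ.filter fun z => x * z⁻¹ ∈ D).card = D.card := by
    intro x
    apply Finset.card_bij (fun z _ => x * z⁻¹)
    · intro z hz
      simpa using (Finset.mem_filter.1 hz).2
    · intro a _ b _ hab
      have h2 : a⁻¹ = b⁻¹ := mul_left_cancel hab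
      simpa using h2
    · intro d hd
      have hdx : x * (d⁻¹ * x)⁻¹ = d := by group
      refine ⟨d⁻¹ * x, Finset.mem_filter.2 ⟨Finset.mem_univ _, by rw [hdx]; exact hd⟩, by group⟩
  -- enumerate cosets and subgroup elements
  let e : Fin (2 * n) ≃ Q := (Fintype.equivFinOfCardEq hQ).symm
  have hHcard : Fintype.card H = 2 * n := by rw [← Nat.card_eq_fintype_card]; exact hH
  let eH : Fin (2 * n) ≃ H := (Fintype.equivFinOfCardEq hHcard).symm
  let σ : Fin (2 * n) × Fin (2 * n) → G := fun p => (eH p.2 : G) * (e p.1).out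
  have hσπ : ∀ p, π (σ p) = e p.1 := by
    intro p
    have h1 : π ((eH p.2 : G) * (e p.1).out) = π ((e p.1).out) := by
      rw [hπ]; simpa using (eH p.2).2
    rw [show σ p = (eH p.2 : G) * (e p.1).out from rfl, h1]
    exact Quotient.out_eq _
  have hσbij : Function.Bijective σ := by
    constructor
    · rintro ⟨i, a⟩ ⟨j, b⟩ hab
      have hij : i = j := by
        have h0 : π (σ (i, a)) = π (σ (j, b)) := by rw [hab]
        rw [hσπ, hσπ] at h0
        exact e.injective h0
      subst hij
      have h2 : (eH a : G) = (eH b : G) := mul_right_cancel hab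
      have h3 : eH a = eH b := Subtype.ext h2
      rw [eH.injective h3]
    · intro x
      have hmem : x * (e (e.symm (π x))).out⁻¹ ∈ H := by
        apply (hπ x (e (e.symm (π x))).out).1
        rw [show π (e (e.symm (π x))).out = e (e.symm (π x)) from Quotient.out_eq _,
          e.apply_symm_apply]
      refine ⟨(e.symm (π x), eH.symm ⟨_, hmem⟩), ?_⟩
      show (eH (eH.symm ⟨_, hmem⟩) : G) * (e (e.symm (π x))).out = x
      rw [eH.apply_symm_apply]
      group
  -- the ±1 weight function
  let χ : G → G → ℤ := fun x y => if x * y⁻¹ ∈ D then -1 else 1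
  have hχsymm : ∀ x y, χ x y = χ y x := by
    intro x y
    by_cases h : x * y⁻¹ ∈ D
    · rw [show χ x y = -1 from if_pos h, show χ y x = -1 from if_pos ((hrev' x y).1 h)]
    · rw [show χ x y = 1 from if_neg h,
        show χ y x = 1 from if_neg fun hc => h ((hrev' y x).1 hc)]
  -- row sums over a different block vanish
  have hrow : ∀ (x : G) (j : Fin (2 * n)), π x ≠ e j →
      ∑ b : Fin (2 * n), χ x (σ (j, b)) = 0 := by
    intro x j hxj
    have hre : ∑ b : Fin (2 * n), χ x (σ (j, b))
        = ∑ z ∈ Finset.univ.filter (fun z => π z = e j), χ x z := by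
      apply Finset.sum_bij (fun b _ => σ (j, b))
      · intro b _
        simp only [Finset.mem_filter, Finset.mem_univ, true_and]
        exact hσπ (j, b)
      · intro a _ b _ hab
        have := hσbij.1 (a₁ := (j, a)) (a₂ := (j, b)) hab
        exact (Prod.ext_iff.1 this).2
      · intro z hz
        simp only [Finset.mem_filter, Finset.mem_univ, true_and] at hz
        obtain ⟨⟨i, b⟩, hib⟩ := hσbij.2 z
        have hi : i = j := by
          apply e.injective
          rw [← hσπ (i, b), hib, hz]
        refine ⟨b, Finset.mem_univ b, ?_⟩
        rw [← hi, hib]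
      · intro b _
        rfl
    rw [hre]
    have hcard1 : ((Finset.univ.filter (fun z => π z = e j)).filter
        (fun z => x * z⁻¹ ∈ D)).card = n := by
      rw [Finset.filter_filter]
      have hout : π (e j).out = e j := Quotient.out_eq _
      have hneq : π x ≠ π (e j).out := by rw [hout]; exact hxj
      have heq : (Finset.univ.filter (fun z => π z = e j ∧ x * z⁻¹ ∈ D))
          = (Finset.univ.filter (fun z => π z = π (e j).out ∧ x * z⁻¹ ∈ D)) := by
        apply Finset.filter_congr
        intro z _
        rw [hout]
      rw [heq]
      exact hblock x (e j).out hneq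
    have hcard2 : ((Finset.univ.filter (fun z => π z = e j)).filter
        (fun z => ¬ x * z⁻¹ ∈ D)).card = n := by
      have h0 := Finset.card_filter_add_card_filter_not
        (s := Finset.univ.filter (fun z => π z = e j)) (p := fun z => x * z⁻¹ ∈ D)
      rw [hcard1, hfiber (e j)] at h0
      omega
    rw [Finset.sum_ite (f := fun _ => (-1 : ℤ)) (g := fun _ => (1 : ℤ)),
      Finset.sum_const, Finset.sum_const, hcard1, hcard2]
    simp
  -- orthogonality of distinct rows
  have horth : ∀ x y : G, x ≠ y → ∑ z : G, χ x z * χ y z = 0 := by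
    intro x y hxy
    have hid : ∀ z : G, χ x z * χ y z = 1 - 2 * (if x * z⁻¹ ∈ D then (1 : ℤ) else 0)
        - 2 * (if y * z⁻¹ ∈ D then (1 : ℤ) else 0)
        + 4 * (if x * z⁻¹ ∈ D ∧ y * z⁻¹ ∈ D then (1 : ℤ) else 0) := by
      intro z
      by_cases h1 : x * z⁻¹ ∈ D <;> by_cases h2 : y * z⁻¹ ∈ D <;>
        simp [χ, h1, h2] <;> ring
    rw [Finset.sum_congr rfl fun z _ => hid z]
    rw [Finset.sum_add_distrib, Finset.sum_sub_distrib, Finset.sum_sub_distrib,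
      ← Finset.mul_sum, ← Finset.mul_sum, ← Finset.mul_sum,
      Finset.sum_boole, Finset.sum_boole, Finset.sum_boole,
      Finset.sum_const, Finset.card_univ, hv]
    rw [show (Finset.univ.filter fun z => x * z⁻¹ ∈ D).card = D.card from hdeg x,
      show (Finset.univ.filter fun z => y * z⁻¹ ∈ D).card = D.card from hdeg y,
      show (Finset.univ.filter fun z => x * z⁻¹ ∈ D ∧ y * z⁻¹ ∈ D).card = n ^ 2 - n from
        hlam x y hxy, hk]
    rw [Nat.cast_sub (by nlinarith : n ≤ 2 * n ^ 2), Nat.cast_sub (by nlinarith : n ≤ n ^ 2)]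
    push_cast
    ring
  have hdiagsum : ∀ x : G, ∑ z : G, χ x z * χ x z = ((4 * n ^ 2 : ℕ) : ℤ) := by
    intro x
    have h1 : ∀ z : G, χ x z * χ x z = 1 := by
      intro z; by_cases h : x * z⁻¹ ∈ D <;> simp [χ, h]
    rw [Finset.sum_congr rfl fun z _ => h1 z, Finset.sum_const, Finset.card_univ, hv]
    simp
  -- assemble everything
  constructor
  · refine ⟨fun i => Finset.univ.filter fun x => π x = e i, ?_, ?_, ?_⟩
    · intro x
      refine ⟨e.symm (π x), ?_, ?_⟩
      · simp only [Finset.mem_filter, Finset.mem_univ, true_and, e.apply_symm_apply]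
      · intro j hj
        simp only [Finset.mem_filter, Finset.mem_univ, true_and] at hj
        rw [hj, e.symm_apply_apply]
    · intro i; exact hfiber (e i)
    · intro i x hx y hy
      simp only [Finset.mem_filter, Finset.mem_univ, true_and] at hx hy
      exact fun hD => hdisj _ ((hπ x y).1 (hx.trans hy.symm)) hD
  · refine ⟨fun p q => χ (σ p) (σ q), ?_, ?_, ?_, ?_, ?_, ?_⟩
    · intro p q
      by_cases h : σ p * (σ q)⁻¹ ∈ D
      · exact Or.inr (if_pos h)
      · exact Or.inl (if_neg h)
    · ext p q
      exact hχsymm (σ q) (σ p)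
    · ext p q
      change ∑ r, χ (σ p) (σ r) * χ (σ q) (σ r) = _
      simp only [Matrix.transpose_apply, Matrix.smul_apply, Matrix.one_apply, smul_eq_mul]
      have hre : ∑ r, χ (σ p) (σ r) * χ (σ q) (σ r) = ∑ z : G, χ (σ p) z * χ (σ q) z :=
        hσbij.sum_comp (fun z => χ (σ p) z * χ (σ q) z)
      rw [hre]
      by_cases hpq : p = q
      · subst hpq
        rw [if_pos rfl, mul_one]
        exact hdiagsum (σ p)
      · rw [if_neg hpq, mul_zero]
        exact horth (σ p) (σ q) fun h => hpq (hσbij.1 h)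
    · intro i a b
      have hmem : σ (i, a) * (σ (i, b))⁻¹ ∈ H := by
        have h1 : σ (i, a) * (σ (i, b))⁻¹ = (eH a : G) * (eH b : G)⁻¹ := by
          show (eH a : G) * (e i).out * ((eH b : G) * (e i).out)⁻¹ = _
          group
        rw [h1]
        exact H.mul_mem (eH a).2 (H.inv_mem (eH b).2)
      exact if_neg (hdisj _ hmem)
    · intro i j hij a
      exact hrow (σ (i, a)) j (by rw [hσπ]; exact fun h => hij (e.injective h))
    · intro i j hij b
      have h0 : ∀ a : Fin (2 * n), χ (σ (i, a)) (σ (j, b)) = χ (σ (j, b)) (σ (i, a)) :=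
        fun a => hχsymm _ _
      rw [Finset.sum_congr rfl fun a _ => h0 a]
      exact hrow (σ (j, b)) i (by rw [hσπ]; exact fun h => hij (e.injective h).symm)
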